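/- The one-dimensional Laguerre–Gaussian generating function ψ(x) := π^{-1/2} (15/8 − (5/2)x² + (1/2)x⁴) e^{-x²} satisfies the moment condition of order 6: ∫_ℝ ψ(x) dx = 1 and ∫_ℝ x^k ψ(x) dx = 0 for every integer k with 1 ≤ k ≤ 5. -/
import Mathlib

open Real MeasureTheory Set

noncomputable section

lemma int_pow_gauss (k : ℕ) : Integrable (fun x : ℝ => x ^ k * Real.exp (-x ^ 2)) := by
  have h := integrable_rpow_mul_exp_neg_mul_sq (b := 1) one_pos
    (s := (k : ℝ)) (lt_of_lt_of_le neg_one_lt_zero (Nat.cast_nonneg k))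
  simpa [Real.rpow_natCast] using h

lemma gauss_moment (n : ℕ) :
    (∫ x : ℝ, x ^ (2 * n) * Real.exp (-x ^ 2)) = Real.Gamma (n + 1 / 2) := by
  have h1 : (∫ x : ℝ, x ^ (2 * n) * Real.exp (-x ^ 2))
      = 2 * ∫ x in Ioi (0 : ℝ), x ^ (2 * n) * Real.exp (-x ^ 2) := by
    rw [← integral_comp_abs (f := fun x : ℝ => x ^ (2 * n) * Real.exp (-x ^ 2))]
    congr 1
    ext x
    rw [pow_mul, pow_mul, sq_abs]
  have h2 : (∫ x in Ioi (0 : ℝ), x ^ (2 * n) * Real.exp (-x ^ 2))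
      = (1 / 2) * Real.Gamma (((2 * n : ℕ) + 1) / 2) := by
    rw [← integral_rpow_mul_exp_neg_rpow two_pos
      (q := ((2 * n : ℕ) : ℝ)) (lt_of_lt_of_le neg_one_lt_zero (Nat.cast_nonneg _))]
    refine setIntegral_congr_fun measurableSet_Ioi fun x hx => ?_
    rw [Real.rpow_natCast, Real.rpow_two]
  rw [h1, h2]
  rw [show (((2 * n : ℕ) : ℝ) + 1) / 2 = n + 1 / 2 by push_cast; ring]
  ring

lemma poly_gauss (m : ℕ) :
    (∫ x : ℝ, x ^ (2 * m) *
        ((15 / 8 - 5 / 2 * x ^ 2 + 1 / 2 * x ^ 4) * Real.exp (-x ^ 2)))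
      = 15 / 8 * Real.Gamma ((m : ℝ) + 1 / 2)
        - 5 / 2 * Real.Gamma ((m : ℝ) + 1 + 1 / 2)
        + 1 / 2 * Real.Gamma ((m : ℝ) + 2 + 1 / 2) := by
  have h : (fun x : ℝ => x ^ (2 * m) *
        ((15 / 8 - 5 / 2 * x ^ 2 + 1 / 2 * x ^ 4) * Real.exp (-x ^ 2)))
      = fun x : ℝ => (15 / 8 * (x ^ (2 * m) * Real.exp (-x ^ 2))
          - 5 / 2 * (x ^ (2 * (m + 1)) * Real.exp (-x ^ 2)))
          + 1 / 2 * (x ^ (2 * (m + 2)) * Real.exp (-x ^ 2)) := by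
    ext x; ring
  have A : Integrable (fun x : ℝ => 15 / 8 * (x ^ (2 * m) * Real.exp (-x ^ 2))) :=
    (int_pow_gauss _).const_mul _
  have B : Integrable (fun x : ℝ => 5 / 2 * (x ^ (2 * (m + 1)) * Real.exp (-x ^ 2))) :=
    (int_pow_gauss _).const_mul _
  have C : Integrable (fun x : ℝ => 1 / 2 * (x ^ (2 * (m + 2)) * Real.exp (-x ^ 2))) :=
    (int_pow_gauss _).const_mul _
  have AB : Integrable (fun x : ℝ => 15 / 8 * (x ^ (2 * m) * Real.exp (-x ^ 2))
      - 5 / 2 * (x ^ (2 * (m + 1)) * Real.exp (-x ^ 2))) := A.sub B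
  rw [h, integral_add AB C, integral_sub A B,
    integral_const_mul, integral_const_mul, integral_const_mul,
    gauss_moment, gauss_moment, gauss_moment]
  push_cast
  ring

lemma gamma_vals :
    Real.Gamma (1 / 2) = Real.sqrt π ∧
    Real.Gamma (1 + 1 / 2) = 1 / 2 * Real.sqrt π ∧
    Real.Gamma (2 + 1 / 2) = 3 / 4 * Real.sqrt π ∧
    Real.Gamma (3 + 1 / 2) = 15 / 8 * Real.sqrt π ∧
    Real.Gamma (4 + 1 / 2) = 105 / 16 * Real.sqrt π := by
  have g0 : Real.Gamma (1 / 2) = Real.sqrt π := Real.Gamma_one_half_eq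
  have g1 : Real.Gamma (1 + 1 / 2) = 1 / 2 * Real.sqrt π := by
    rw [show (1 : ℝ) + 1 / 2 = 1 / 2 + 1 by ring, Real.Gamma_add_one (by norm_num), g0]
  have g2 : Real.Gamma (2 + 1 / 2) = 3 / 4 * Real.sqrt π := by
    rw [show (2 : ℝ) + 1 / 2 = (1 + 1 / 2) + 1 by ring, Real.Gamma_add_one (by norm_num), g1]
    ring
  have g3 : Real.Gamma (3 + 1 / 2) = 15 / 8 * Real.sqrt π := by
    rw [show (3 : ℝ) + 1 / 2 = (2 + 1 / 2) + 1 by ring, Real.Gamma_add_one (by norm_num), g2]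
    ring
  have g4 : Real.Gamma (4 + 1 / 2) = 105 / 16 * Real.sqrt π := by
    rw [show (4 : ℝ) + 1 / 2 = (3 + 1 / 2) + 1 by ring, Real.Gamma_add_one (by norm_num), g3]
    ring
  exact ⟨g0, g1, g2, g3, g4⟩

/-- **Moment condition of order 6 for the Laguerre–Gaussian generating function**
`ψ(x) = π^{-1/2} (15/8 − (5/2)x² + (1/2)x⁴) e^{-x²}`:
its integral is `1` and its moments of orders `1, …, 5` vanish. -/
theorem laguerreGaussian_order_six_moment_condition :
    (∫ x : ℝ, Real.pi ^ (-(1 : ℝ) / 2) *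
        (15 / 8 - 5 / 2 * x ^ 2 + 1 / 2 * x ^ 4) * Real.exp (-x ^ 2)) = 1 ∧
      ∀ k : ℕ, 1 ≤ k → k ≤ 5 →
        (∫ x : ℝ, x ^ k * (Real.pi ^ (-(1 : ℝ) / 2) *
            (15 / 8 - 5 / 2 * x ^ 2 + 1 / 2 * x ^ 4) * Real.exp (-x ^ 2))) = 0 := by
  obtain ⟨g0, g1, g2, g3, g4⟩ := gamma_vals
  have hpi : Real.pi ^ (-(1 : ℝ) / 2) * Real.sqrt π = 1 := by
    rw [Real.sqrt_eq_rpow, ← Real.rpow_add Real.pi_pos]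
    norm_num
  constructor
  · have h : (fun x : ℝ => Real.pi ^ (-(1 : ℝ) / 2) *
        (15 / 8 - 5 / 2 * x ^ 2 + 1 / 2 * x ^ 4) * Real.exp (-x ^ 2))
      = fun x : ℝ => Real.pi ^ (-(1 : ℝ) / 2) * (x ^ (2 * 0) *
        ((15 / 8 - 5 / 2 * x ^ 2 + 1 / 2 * x ^ 4) * Real.exp (-x ^ 2))) := by
      ext x; ring
    rw [h, integral_const_mul, poly_gauss 0]
    push_cast
    rw [show (0 : ℝ) + 1 / 2 = 1 / 2 by ring, show (0 : ℝ) + 1 + 1 / 2 = 1 + 1 / 2 by ring,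
      show (0 : ℝ) + 2 + 1 / 2 = 2 + 1 / 2 by ring, g0, g1, g2]
    rw [show 15 / 8 * Real.sqrt π - 5 / 2 * (1 / 2 * Real.sqrt π)
        + 1 / 2 * (3 / 4 * Real.sqrt π) = Real.sqrt π by ring]
    exact hpi
  · intro k hk1 hk5
    interval_cases k
    · -- k = 1, odd
      have := integral_neg_eq_self (fun x : ℝ => x ^ 1 * (Real.pi ^ (-(1 : ℝ) / 2) *
          (15 / 8 - 5 / 2 * x ^ 2 + 1 / 2 * x ^ 4) * Real.exp (-x ^ 2))) volume
      have h2 : ∀ x : ℝ, ((-x) ^ 1 * (Real.pi ^ (-(1 : ℝ) / 2) *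
          (15 / 8 - 5 / 2 * (-x) ^ 2 + 1 / 2 * (-x) ^ 4) * Real.exp (-(-x) ^ 2)))
          = -(x ^ 1 * (Real.pi ^ (-(1 : ℝ) / 2) *
          (15 / 8 - 5 / 2 * x ^ 2 + 1 / 2 * x ^ 4) * Real.exp (-x ^ 2))) := fun x => by
        rw [show (-x) ^ 2 = x ^ 2 by ring, show (-x) ^ 4 = x ^ 4 by ring]; ring
      simp_rw [h2, integral_neg] at this
      linarith
    · -- k = 2
      have h : (fun x : ℝ => x ^ 2 * (Real.pi ^ (-(1 : ℝ) / 2) *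
          (15 / 8 - 5 / 2 * x ^ 2 + 1 / 2 * x ^ 4) * Real.exp (-x ^ 2)))
        = fun x : ℝ => Real.pi ^ (-(1 : ℝ) / 2) * (x ^ (2 * 1) *
          ((15 / 8 - 5 / 2 * x ^ 2 + 1 / 2 * x ^ 4) * Real.exp (-x ^ 2))) := by
        ext x; ring
      rw [h, integral_const_mul, poly_gauss 1]
      push_cast
      rw [show (1 : ℝ) + 2 + 1 / 2 = 3 + 1 / 2 by ring, show (1 : ℝ) + 1 + 1 / 2 = 2 + 1 / 2 by ring,
        g1, g2, g3]
      ring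
    · -- k = 3, odd
      have := integral_neg_eq_self (fun x : ℝ => x ^ 3 * (Real.pi ^ (-(1 : ℝ) / 2) *
          (15 / 8 - 5 / 2 * x ^ 2 + 1 / 2 * x ^ 4) * Real.exp (-x ^ 2))) volume
      have h2 : ∀ x : ℝ, ((-x) ^ 3 * (Real.pi ^ (-(1 : ℝ) / 2) *
          (15 / 8 - 5 / 2 * (-x) ^ 2 + 1 / 2 * (-x) ^ 4) * Real.exp (-(-x) ^ 2)))
          = -(x ^ 3 * (Real.pi ^ (-(1 : ℝ) / 2) *
          (15 / 8 - 5 / 2 * x ^ 2 + 1 / 2 * x ^ 4) * Real.exp (-x ^ 2))) := fun x => by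
        rw [show (-x) ^ 2 = x ^ 2 by ring, show (-x) ^ 4 = x ^ 4 by ring]; ring
      simp_rw [h2, integral_neg] at this
      linarith
    · -- k = 4
      have h : (fun x : ℝ => x ^ 4 * (Real.pi ^ (-(1 : ℝ) / 2) *
          (15 / 8 - 5 / 2 * x ^ 2 + 1 / 2 * x ^ 4) * Real.exp (-x ^ 2)))
        = fun x : ℝ => Real.pi ^ (-(1 : ℝ) / 2) * (x ^ (2 * 2) *
          ((15 / 8 - 5 / 2 * x ^ 2 + 1 / 2 * x ^ 4) * Real.exp (-x ^ 2))) := by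
        ext x; ring
      rw [h, integral_const_mul, poly_gauss 2]
      push_cast
      rw [show (2 : ℝ) + 2 + 1 / 2 = 4 + 1 / 2 by ring, show (2 : ℝ) + 1 + 1 / 2 = 3 + 1 / 2 by ring,
        g2, g3, g4]
      ring
    · -- k = 5, odd
      have := integral_neg_eq_self (fun x : ℝ => x ^ 5 * (Real.pi ^ (-(1 : ℝ) / 2) *
          (15 / 8 - 5 / 2 * x ^ 2 + 1 / 2 * x ^ 4) * Real.exp (-x ^ 2))) volume
      have h2 : ∀ x : ℝ, ((-x) ^ 5 * (Real.pi ^ (-(1 : ℝ) / 2) *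
          (15 / 8 - 5 / 2 * (-x) ^ 2 + 1 / 2 * (-x) ^ 4) * Real.exp (-(-x) ^ 2)))
          = -(x ^ 5 * (Real.pi ^ (-(1 : ℝ) / 2) *
          (15 / 8 - 5 / 2 * x ^ 2 + 1 / 2 * x ^ 4) * Real.exp (-x ^ 2))) := fun x => by
        rw [show (-x) ^ 2 = x ^ 2 by ring, show (-x) ^ 4 = x ^ 4 by ring]; ring
      simp_rw [h2, integral_neg] at this
      linarith
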